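/- Let Γ be a curve in ℂ parametrized by z(t) = a(t) + it, t ∈ [−1/√2, 1/√2], with a Lipschitz and z(−t) = conj(z(t)). Then for each integer k ≥ 0, the condition ∫_Γ z̄ z^{4k} dz = (−1)^k i ω/((4k+1)(2k+1)) is equivalent to Re{∫_0^{1/√2} (a(t)+it)^{4k+1} dt} = (−1)^k (ω+1)/(4(2k+1)), provided the endpoints satisfy z(±1/√2) = ±i/√2 + 1/√2 (so |z(±1/√2)| = 1). -/

import Mathlib

open MeasureTheory intervalIntegral Filter Topology


open MeasureTheory intervalIntegral Filter Topology

section helpers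

/-- difference-quotient sequence converges to the derivative -/
lemma seq_slope {f : ℝ → ℂ} {x : ℝ} {d : ℂ} (h : HasDerivAt f d x) :
    Tendsto (fun n : ℕ => ((n:ℝ)+1) • (f (x + ((n:ℝ)+1)⁻¹) - f x)) atTop (𝓝 d) := by
  rw [hasDerivAt_iff_tendsto_slope] at h
  have hpos : ∀ n : ℕ, (0:ℝ) < ((n:ℝ)+1)⁻¹ := fun n => by positivity
  have hseq : Tendsto (fun n : ℕ => x + ((n:ℝ)+1)⁻¹) atTop (𝓝[≠] x) := by
    apply tendsto_nhdsWithin_of_tendsto_nhds_of_eventually_within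
    · have : Tendsto (fun n : ℕ => ((n:ℝ)+1)⁻¹) atTop (𝓝 0) :=
        tendsto_one_div_add_atTop_nhds_zero_nat.congr (by intro n; rw [one_div])
      simpa using tendsto_const_nhds.add this
    · filter_upwards with n
      simp only [Set.mem_compl_iff, Set.mem_singleton_iff]
      intro hc
      nlinarith [hpos n, congrArg (fun y => y - x) hc]
  have := h.comp hseq
  refine this.congr fun n => ?_
  simp only [Function.comp, slope_def_module]
  rw [add_sub_cancel_left, inv_inv]

lemma lip_ftc {f : ℝ → ℂ} (hf : ∃ K : NNReal, LipschitzWith K f) {a b : ℝ} :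
    ∫ t in a..b, deriv f t = f b - f a := by
  obtain ⟨K, hf⟩ := hf
  have hc : Continuous f := hf.continuous
  set u : ℕ → ℝ := fun n => ((n:ℝ)+1)⁻¹ with hu
  set g : ℕ → ℝ → ℂ := fun n t => ((n:ℝ)+1) • (f (t + u n) - f t) with hg
  -- dominated convergence
  have h1 : Tendsto (fun n => ∫ t in a..b, g n t) atTop (𝓝 (∫ t in a..b, deriv f t)) := by
    apply intervalIntegral.tendsto_integral_filter_of_dominated_convergence (bound := fun _ => (K:ℝ))
    · filter_upwards with n
      exact ((hc.comp (continuous_id.add continuous_const)).sub hc |>.const_smul ((n:ℝ)+1)).aestronglyMeasurable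
    · filter_upwards with n
      filter_upwards with t _
      have := hf.dist_le_mul (t + u n) t
      simp only [dist_eq_norm, add_sub_cancel_left] at this
      have hpos : (0:ℝ) < ((n:ℝ)+1) := by positivity
      rw [hg]
      simp only [norm_smul, Real.norm_eq_abs, abs_of_pos hpos]
      calc ((n:ℝ)+1) * ‖f (t + u n) - f t‖ ≤ ((n:ℝ)+1) * ((K:ℝ) * |u n|) := by
            apply mul_le_mul_of_nonneg_left _ hpos.le
            simpa [Real.norm_eq_abs] using this
        _ = (K:ℝ) := by
            rw [hu]; simp only [abs_of_pos (by positivity : (0:ℝ) < ((n:ℝ)+1)⁻¹)]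
            field_simp
    · exact intervalIntegrable_const
    · filter_upwards [hf.ae_differentiableAt_real] with t ht using fun _ => seq_slope ht.hasDerivAt
  -- compute limit of the approximants
  have hint : ∀ c d : ℝ, IntervalIntegrable f volume c d := fun c d => hc.intervalIntegrable _ _
  have h2 : ∀ n, ∫ t in a..b, g n t
      = ((n:ℝ)+1) • ((∫ t in b..(b + u n), f t) - ∫ t in a..(a + u n), f t) := by
    intro n
    rw [hg]
    simp only
    rw [intervalIntegral.integral_smul]
    congr 1
    have hcu : Continuous fun t : ℝ => f (t + u n) := hc.comp (by continuity)
    rw [intervalIntegral.integral_sub (hcu.intervalIntegrable _ _) (hint a b)]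
    have e1 : (∫ t in a..b, f (t + u n)) = ∫ t in (a + u n)..(b + u n), f t :=
      intervalIntegral.integral_comp_add_right f (u n)
    rw [e1]
    have e2 : (∫ t in (a + u n)..(b + u n), f t)
        = (∫ t in (a + u n)..b, f t) + ∫ t in b..(b + u n), f t :=
      (intervalIntegral.integral_add_adjacent_intervals (hint _ _) (hint _ _)).symm
    have e3 : (∫ t in a..b, f t)
        = (∫ t in a..(a + u n), f t) + ∫ t in (a + u n)..b, f t :=
      (intervalIntegral.integral_add_adjacent_intervals (hint _ _) (hint _ _)).symm
    rw [e2, e3]; ring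
  have hder : ∀ c : ℝ, Tendsto (fun n : ℕ => ((n:ℝ)+1) • ∫ t in c..(c + u n), f t) atTop (𝓝 (f c)) := by
    intro c
    have hF : HasDerivAt (fun x => ∫ t in c..x, f t) (f c) c :=
      intervalIntegral.integral_hasDerivAt_right (hint c c)
        (hc.stronglyMeasurableAtFilter _ _) hc.continuousAt
    have := seq_slope hF
    simpa using this
  have h3 : Tendsto (fun n => ∫ t in a..b, g n t) atTop (𝓝 (f b - f a)) := by
    simp only [h2, smul_sub]
    exact (hder b).sub (hder a)
  exact tendsto_nhds_unique h1 h3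

lemma lipE_add {f g : ℝ → ℂ} (hf : ∃ K : NNReal, LipschitzWith K f)
    (hg : ∃ K : NNReal, LipschitzWith K g) :
    ∃ K : NNReal, LipschitzWith K (fun x => f x + g x) := by
  obtain ⟨Kf, hf⟩ := hf; obtain ⟨Kg, hg⟩ := hg
  exact ⟨Kf + Kg, hf.add hg⟩

lemma lipE_mul {f g : ℝ → ℂ} (hf : ∃ K : NNReal, LipschitzWith K f)
    (hg : ∃ K : NNReal, LipschitzWith K g)
    (hbf : ∃ M : ℝ, ∀ x, ‖f x‖ ≤ M) (hbg : ∃ M : ℝ, ∀ x, ‖g x‖ ≤ M) :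
    ∃ K : NNReal, LipschitzWith K (fun x => f x * g x) := by
  obtain ⟨Kf, hf⟩ := hf; obtain ⟨Kg, hg⟩ := hg
  obtain ⟨Mf, hMf⟩ := hbf; obtain ⟨Mg, hMg⟩ := hbg
  refine ⟨Real.toNNReal (Mf * Kg + Mg * Kf), LipschitzWith.of_dist_le_mul fun x y => ?_⟩
  have h1 : dist (f x * g x) (f y * g y) ≤ ‖f x‖ * dist (g x) (g y) + ‖g y‖ * dist (f x) (f y) := by
    simp only [dist_eq_norm]
    calc ‖f x * g x - f y * g y‖ = ‖f x * (g x - g y) + (f x - f y) * g y‖ := by ring_nf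
      _ ≤ ‖f x * (g x - g y)‖ + ‖(f x - f y) * g y‖ := norm_add_le _ _
      _ = ‖f x‖ * ‖g x - g y‖ + ‖g y‖ * ‖f x - f y‖ := by rw [norm_mul, norm_mul]; ring
  have h2 := hf.dist_le_mul x y
  have h3 := hg.dist_le_mul x y
  have hMf0 : 0 ≤ Mf := le_trans (norm_nonneg _) (hMf x)
  have hMg0 : 0 ≤ Mg := le_trans (norm_nonneg _) (hMg y)
  have hco : (Real.toNNReal (Mf * Kg + Mg * Kf) : ℝ) = Mf * Kg + Mg * Kf := by
    rw [Real.coe_toNNReal]; positivity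
  rw [hco]
  have d0 : 0 ≤ dist x y := dist_nonneg
  nlinarith [hMf x, hMg y, dist_nonneg (x := f x) (y := f y), dist_nonneg (x := g x) (y := g y),
    mul_le_mul_of_nonneg_left h3 hMf0, mul_le_mul_of_nonneg_left h2 hMg0,
    mul_le_mul_of_nonneg_right (hMf x) (dist_nonneg (x := g x) (y := g y)),
    mul_le_mul_of_nonneg_right (hMg y) (dist_nonneg (x := f x) (y := f y))]

lemma bddE_mul {f g : ℝ → ℂ} (hbf : ∃ M : ℝ, ∀ x, ‖f x‖ ≤ M) (hbg : ∃ M : ℝ, ∀ x, ‖g x‖ ≤ M) :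
    ∃ M : ℝ, ∀ x, ‖f x * g x‖ ≤ M := by
  obtain ⟨Mf, hMf⟩ := hbf; obtain ⟨Mg, hMg⟩ := hbg
  have hMf0 : 0 ≤ Mf := le_trans (norm_nonneg _) (hMf 0)
  refine ⟨Mf * Mg, fun x => ?_⟩
  rw [norm_mul]
  exact mul_le_mul (hMf x) (hMg x) (norm_nonneg _) hMf0

lemma lipE_pow {f : ℝ → ℂ} (hf : ∃ K : NNReal, LipschitzWith K f)
    (hbf : ∃ M : ℝ, ∀ x, ‖f x‖ ≤ M) (n : ℕ) :
    (∃ K : NNReal, LipschitzWith K (fun x => f x ^ n)) ∧ (∃ M : ℝ, ∀ x, ‖f x ^ n‖ ≤ M) := by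
  induction n with
  | zero => exact ⟨⟨0, by simpa using LipschitzWith.const (1:ℂ)⟩, ⟨1, by simp⟩⟩
  | succ n ih =>
      constructor
      · have h := lipE_mul ih.1 hf ih.2 hbf
        have he : (fun x => f x ^ n * f x) = fun x => f x ^ (n+1) := by
          funext x; rw [pow_succ]
        rwa [he] at h
      · have := bddE_mul ih.2 hbf
        exact ⟨this.choose, fun x => by rw [pow_succ]; exact this.choose_spec x⟩

lemma norm_deriv_le_lip {f : ℝ → ℂ} {K : NNReal} (hf : LipschitzWith K f) (x : ℝ) :
    ‖deriv f x‖ ≤ K := by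
  by_cases h : DifferentiableAt ℝ f x
  · have h1 : ‖fderiv ℝ f x‖ ≤ K := norm_fderiv_le_of_lipschitz ℝ hf
    have h2 : deriv f x = fderiv ℝ f x 1 := rfl
    rw [h2]
    calc ‖fderiv ℝ f x 1‖ ≤ ‖fderiv ℝ f x‖ * ‖(1:ℝ)‖ := (fderiv ℝ f x).le_opNorm 1
      _ ≤ K := by simpa using h1
  · rw [deriv_zero_of_not_differentiableAt h]; simp

end helpers


section helpers2

lemma lipE_sub {f g : ℝ → ℂ} (hf : ∃ K : NNReal, LipschitzWith K f)
    (hg : ∃ K : NNReal, LipschitzWith K g) :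
    ∃ K : NNReal, LipschitzWith K (fun x => f x - g x) := by
  obtain ⟨Kf, hf⟩ := hf; obtain ⟨Kg, hg⟩ := hg
  refine ⟨Kf + Kg, LipschitzWith.of_dist_le_mul fun x y => ?_⟩
  calc dist (f x - g x) (f y - g y) ≤ dist (f x) (f y) + dist (g x) (g y) := dist_sub_sub_le _ _ _ _
    _ ≤ (Kf:ℝ) * dist x y + (Kg:ℝ) * dist x y := add_le_add (hf.dist_le_mul x y) (hg.dist_le_mul x y)
    _ = ((Kf + Kg : NNReal):ℝ) * dist x y := by push_cast; ring

lemma intervalIntegral_conj {f : ℝ → ℂ} {a b : ℝ} :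
    ∫ t in a..b, (starRingEnd ℂ) (f t) = (starRingEnd ℂ) (∫ t in a..b, f t) := by
  rw [intervalIntegral_eq_integral_uIoc, intervalIntegral_eq_integral_uIoc, integral_conj]
  split_ifs <;> simp [Complex.real_smul, map_mul, Complex.conj_ofReal]

/-- the clamp function -/
def clampF (r : ℝ) : ℝ → ℝ := fun t => max (-r) (min t r)

lemma clampF_lip (r : ℝ) : LipschitzWith 1 (clampF r) :=
  (LipschitzWith.id.min_const r).const_max (-r)

lemma clampF_mem {r : ℝ} (hr : 0 ≤ r) (t : ℝ) : clampF r t ∈ Set.Icc (-r) r := by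
  constructor
  · exact le_max_left _ _
  · exact max_le (by linarith) (min_le_right t r)

lemma clampF_eq {r t : ℝ} (ht : t ∈ Set.Icc (-r) r) : clampF r t = t := by
  rw [clampF, min_eq_left ht.2, max_eq_right ht.1]

/-- the clamped curve -/
noncomputable def zC (a : ℝ → ℝ) (r : ℝ) : ℝ → ℂ :=
  fun t => ((a (clampF r t) : ℝ) : ℂ) + ((clampF r t : ℝ) : ℂ) * Complex.I

/-- the primitive -/
noncomputable def PhiF (a : ℝ → ℝ) (r : ℝ) (k : ℕ) : ℝ → ℂ := fun t =>
  (1 / ((4*k+2 : ℕ) : ℂ)) * zC a r t ^ (4*k+2)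
    - (2 * Complex.I / ((4*k+1 : ℕ) : ℂ)) * (((clampF r t : ℝ) : ℂ) * zC a r t ^ (4*k+1))

lemma clampC_lip (r : ℝ) : ∃ K : NNReal, LipschitzWith K (fun t => ((clampF r t : ℝ) : ℂ)) :=
  ⟨1 * 1, Complex.isometry_ofReal.lipschitz.comp (clampF_lip r)⟩

lemma clampC_bdd {r : ℝ} (hr : 0 ≤ r) : ∃ M : ℝ, ∀ t, ‖((clampF r t : ℝ) : ℂ)‖ ≤ M := by
  refine ⟨r, fun t => ?_⟩
  rw [Complex.norm_real, Real.norm_eq_abs, abs_le]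
  exact ⟨(clampF_mem hr t).1, (clampF_mem hr t).2⟩

lemma zC_lip {a : ℝ → ℝ} {K : NNReal} (ha : LipschitzWith K a) (r : ℝ) :
    ∃ L : NNReal, LipschitzWith L (zC a r) := by
  apply lipE_add
  · exact ⟨1 * (K * 1), Complex.isometry_ofReal.lipschitz.comp (ha.comp (clampF_lip r))⟩
  · refine lipE_mul (clampC_lip r) ⟨0, LipschitzWith.const Complex.I⟩ ?_ ⟨1, fun t => by simp⟩
    rcases le_or_gt 0 r with h | h
    · exact clampC_bdd h
    · refine ⟨-r, fun t => ?_⟩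
      rw [Complex.norm_real, Real.norm_eq_abs, abs_le]
      constructor
      · rw [clampF]; exact le_trans (by linarith) (le_max_left _ _)
      · rw [clampF]; exact max_le (by linarith) (le_trans (min_le_right _ _) (by linarith))

lemma zC_bdd {a : ℝ → ℝ} {K : NNReal} (ha : LipschitzWith K a) {r : ℝ} (hr : 0 ≤ r) :
    ∃ M : ℝ, ∀ t, ‖zC a r t‖ ≤ M := by
  refine ⟨(|a 0| + K * r) + r, fun t => ?_⟩
  have h1 : |a (clampF r t) - a 0| ≤ K * |clampF r t| := by
    have := ha.dist_le_mul (clampF r t) 0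
    simpa [Real.dist_eq] using this
  have h2 : |clampF r t| ≤ r := by
    rw [abs_le]; exact ⟨(clampF_mem hr t).1, (clampF_mem hr t).2⟩
  have h3 : |a (clampF r t)| ≤ |a 0| + K * r := by
    have := abs_sub_abs_le_abs_sub (a (clampF r t)) (a 0)
    have hK : (K:ℝ) * |clampF r t| ≤ K * r := by
      apply mul_le_mul_of_nonneg_left h2 K.coe_nonneg
    linarith
  calc ‖zC a r t‖ ≤ ‖((a (clampF r t) : ℝ) : ℂ)‖ + ‖((clampF r t : ℝ):ℂ) * Complex.I‖ :=
        norm_add_le _ _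
    _ ≤ (|a 0| + K * r) + r := by
        rw [norm_mul]
        simp only [Complex.norm_real, Real.norm_eq_abs, Complex.norm_I, mul_one]
        exact add_le_add h3 h2
    _ = (|a 0| + K * r) + r := rfl

lemma PhiF_lip {a : ℝ → ℝ} {K : NNReal} (ha : LipschitzWith K a) {r : ℝ} (hr : 0 ≤ r) (k : ℕ) :
    ∃ L : NNReal, LipschitzWith L (PhiF a r k) := by
  have hz := zC_lip ha r
  have hb := zC_bdd ha hr
  apply lipE_sub
  · exact lipE_mul ⟨0, LipschitzWith.const _⟩ (lipE_pow hz hb (4*k+2)).1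
      ⟨‖(1 / ((4*k+2 : ℕ) : ℂ))‖, fun t => le_rfl⟩ (lipE_pow hz hb (4*k+2)).2
  · refine lipE_mul ⟨0, LipschitzWith.const _⟩ ?_ ⟨‖(2 * Complex.I / ((4*k+1 : ℕ) : ℂ))‖, fun t => le_rfl⟩ ?_
    · exact lipE_mul (clampC_lip r) (lipE_pow hz hb (4*k+1)).1 (clampC_bdd hr) (lipE_pow hz hb (4*k+1)).2
    · exact bddE_mul (clampC_bdd hr) (lipE_pow hz hb (4*k+1)).2

end helpers2
section derivlemma

lemma hasDerivAt_pow_comp {f : ℝ → ℂ} {f' : ℂ} {x : ℝ} (hf : HasDerivAt f f' x) (n : ℕ) :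
    HasDerivAt (fun s => f s ^ n) (((n:ℕ):ℂ) * f x ^ (n-1) * f') x := by
  have h := (hasDerivAt_pow n (f x)).comp x hf
  simpa [Function.comp_def, mul_assoc] using h

lemma PhiF_deriv {a : ℝ → ℝ} {r t : ℝ} (ht : t ∈ Set.Ioo (-r) r)
    (hd : DifferentiableAt ℝ a t) (k : ℕ) :
    (starRingEnd ℂ) (((a t : ℝ):ℂ) + (t:ℂ) * Complex.I)
        * (((a t : ℝ):ℂ) + (t:ℂ) * Complex.I) ^ (4*k)
        * ((Complex.ofReal (deriv a t)) + Complex.I)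
      = deriv (PhiF a r k) t
        + (2 * Complex.I / ((4*k+1 : ℕ) : ℂ)) * (((a t : ℝ):ℂ) + (t:ℂ) * Complex.I) ^ (4*k+1) := by
  set Z : ℝ → ℂ := fun s => ((a s : ℝ):ℂ) + (s:ℂ) * Complex.I with hZ
  set Ψ : ℝ → ℂ := fun s =>
      (1 / ((4*k+2 : ℕ) : ℂ)) * Z s ^ (4*k+2)
        - (2 * Complex.I / ((4*k+1 : ℕ) : ℂ)) * ((s:ℂ) * Z s ^ (4*k+1)) with hΨ
  -- Φ agrees with Ψ near t
  have hev : PhiF a r k =ᶠ[nhds t] Ψ := by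
    filter_upwards [Ioo_mem_nhds ht.1 ht.2] with s hs
    have hc : clampF r s = s := clampF_eq (Set.mem_Icc_of_Ioo hs)
    simp only [PhiF, zC, Ψ, Z, hc]
  -- derivative of Ψ
  have hza : HasDerivAt (fun s => ((a s : ℝ):ℂ)) ((deriv a t : ℝ):ℂ) t := hd.hasDerivAt.ofReal_comp
  have hid : HasDerivAt (fun s : ℝ => (s:ℂ)) 1 t := by
    simpa using (hasDerivAt_id t).ofReal_comp
  have hzz : HasDerivAt Z (((deriv a t : ℝ):ℂ) + Complex.I) t := by
    have := hza.add (hid.mul_const Complex.I)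
    simpa [Pi.add_def] using this
  have hp1 : HasDerivAt (fun s => Z s ^ (4*k+2))
      (((4*k+2 : ℕ):ℂ) * Z t ^ (4*k+1) * (((deriv a t : ℝ):ℂ) + Complex.I)) t := by
    have h := hasDerivAt_pow_comp hzz (4*k+2)
    have he : 4*k+2-1 = 4*k+1 := by omega
    rwa [he] at h
  have hp2 : HasDerivAt (fun s : ℝ => (s:ℂ) * Z s ^ (4*k+1))
      (1 * Z t ^ (4*k+1)
        + (t:ℂ) * (((4*k+1 : ℕ):ℂ) * Z t ^ (4*k) * (((deriv a t : ℝ):ℂ) + Complex.I))) t := by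
    have hq := hasDerivAt_pow_comp hzz (4*k+1)
    have he : 4*k+1-1 = 4*k := by omega
    rw [he] at hq
    exact hid.mul hq
  have hΨd : HasDerivAt Ψ
      ((1 / ((4*k+2 : ℕ) : ℂ)) * (((4*k+2 : ℕ):ℂ) * Z t ^ (4*k+1) * (((deriv a t : ℝ):ℂ) + Complex.I))
        - (2 * Complex.I / ((4*k+1 : ℕ) : ℂ)) * (1 * Z t ^ (4*k+1)
            + (t:ℂ) * (((4*k+1 : ℕ):ℂ) * Z t ^ (4*k) * (((deriv a t : ℝ):ℂ) + Complex.I)))) t :=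
    (hp1.const_mul _).sub (hp2.const_mul _)
  have hder : deriv (PhiF a r k) t = _ := hev.deriv_eq.trans hΨd.deriv
  rw [hder]
  -- now pure algebra
  have hn1 : ((4*k+2 : ℕ) : ℂ) ≠ 0 := Nat.cast_ne_zero.mpr (by omega)
  have hn2 : ((4*k+1 : ℕ) : ℂ) ≠ 0 := Nat.cast_ne_zero.mpr (by omega)
  have hconj : (starRingEnd ℂ) (Z t) = ((a t : ℝ):ℂ) - (t:ℂ) * Complex.I := by
    simp only [hZ, map_add, map_mul, Complex.conj_ofReal, Complex.conj_I]
    ring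
  rw [hZ] at hconj ⊢
  simp only at hconj ⊢
  rw [hconj]
  have hn1' : (4*(k:ℂ)+2) ≠ 0 := by
    intro h
    have := congrArg Complex.re h
    simp [Complex.add_re, Complex.mul_re] at this
    nlinarith [Nat.cast_nonneg (α:=ℝ) k]
  have hn2' : (4*(k:ℂ)+1) ≠ 0 := by
    intro h
    have := congrArg Complex.re h
    simp [Complex.add_re, Complex.mul_re] at this
    nlinarith [Nat.cast_nonneg (α:=ℝ) k]
  push_cast
  field_simp
  ring
end derivlemma

noncomputable section

/-- equivalence of the moment conditions on the curve Γ via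
integration by parts and the reflection symmetry z(−t) = conj(z(t)). -/
theorem stmt17 (ω : ℝ) (hω : ω ∈ Set.Ioo (0:ℝ) 1)
    (a : ℝ → ℝ) (K : NNReal) (ha : LipschitzWith K a)
    (hsym : ∀ t, a (-t) = a t) (hend : a (1/Real.sqrt 2) = 1/Real.sqrt 2)
    (z : ℝ → ℂ) (hz : ∀ t, z t = (a t : ℂ) + t * Complex.I) (k : ℕ) :
    ((∫ t in (-(1/Real.sqrt 2))..(1/Real.sqrt 2),
        (starRingEnd ℂ) (z t) * (z t)^(4*k) * ((Complex.ofReal (deriv a t)) + Complex.I))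
      = (-1:ℂ)^k * Complex.I * (ω:ℂ) / (((4*k+1 : ℕ) : ℂ) * ((2*k+1 : ℕ) : ℂ)))
    ↔ (∫ t in (0:ℝ)..(1/Real.sqrt 2), (z t)^(4*k+1)).re
        = (-1:ℝ)^k * (ω+1) / (4*((2*k+1 : ℕ) : ℝ)) := by
  simp only [hz]
  set r : ℝ := 1/Real.sqrt 2 with hrdef
  have hs2 : (0:ℝ) < Real.sqrt 2 := Real.sqrt_pos.mpr (by norm_num)
  have hr0 : 0 < r := by positivity
  have hr2 : r^2 = 1/2 := by
    rw [hrdef, div_pow, one_pow, Real.sq_sqrt] <;> norm_num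
  have hn1 : ((4*k+2:ℕ):ℂ) ≠ 0 := Nat.cast_ne_zero.mpr (by omega)
  have hn2 : ((4*k+1:ℕ):ℂ) ≠ 0 := Nat.cast_ne_zero.mpr (by omega)
  have hn3 : ((2*k+1:ℕ):ℂ) ≠ 0 := Nat.cast_ne_zero.mpr (by omega)
  have hac : Continuous a := ha.continuous
  have hzcont : Continuous (fun t : ℝ => ((a t : ℝ):ℂ) + (t:ℂ)*Complex.I) := by fun_prop
  have hpowcont : Continuous (fun t : ℝ => (((a t : ℝ):ℂ) + (t:ℂ)*Complex.I)^(4*k+1)) :=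
    hzcont.pow _
  -- step 1: rewrite the integrand a.e. via the primitive PhiF
  have hne_r : ∀ᵐ t : ℝ, t ≠ r := by
    rw [MeasureTheory.ae_iff]
    have h : {t : ℝ | ¬ t ≠ r} = {r} := by ext t; simp [not_not]
    rw [h]
    exact Real.volume_singleton
  have hcong : ∀ᵐ t : ℝ, t ∈ Set.uIoc (-r) r →
      ((starRingEnd ℂ) (((a t : ℝ):ℂ) + (t:ℂ)*Complex.I)
          * (((a t : ℝ):ℂ) + (t:ℂ)*Complex.I)^(4*k) * ((Complex.ofReal (deriv a t)) + Complex.I))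
        = deriv (PhiF a r k) t
            + (2*Complex.I/((4*k+1:ℕ):ℂ)) * (((a t : ℝ):ℂ) + (t:ℂ)*Complex.I)^(4*k+1) := by
    filter_upwards [ha.ae_differentiableAt_real, hne_r] with t hdiff hner hmem
    have ht : t ∈ Set.Ioo (-r) r := by
      rw [Set.uIoc_of_le (by linarith : -r ≤ r)] at hmem
      exact ⟨hmem.1, lt_of_le_of_ne hmem.2 hner⟩
    exact PhiF_deriv ht hdiff k
  have hstep1 : (∫ t in (-r)..r,
      (starRingEnd ℂ) (((a t : ℝ):ℂ) + (t:ℂ)*Complex.I)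
          * (((a t : ℝ):ℂ) + (t:ℂ)*Complex.I)^(4*k) * ((Complex.ofReal (deriv a t)) + Complex.I))
      = ∫ t in (-r)..r, (deriv (PhiF a r k) t
            + (2*Complex.I/((4*k+1:ℕ):ℂ)) * (((a t : ℝ):ℂ) + (t:ℂ)*Complex.I)^(4*k+1)) :=
    intervalIntegral.integral_congr_ae hcong
  rw [hstep1]
  -- step 2: split the integral and apply FTC for the Lipschitz primitive
  have hPhiLip := PhiF_lip ha hr0.le k
  have hder_int : IntervalIntegrable (deriv (PhiF a r k)) volume (-r) r := by
    obtain ⟨L, hL⟩ := hPhiLip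
    constructor <;>
    · apply Measure.integrableOn_of_bounded (M := (L:ℝ)) measure_Ioc_lt_top.ne
        (aestronglyMeasurable_deriv _ _)
      filter_upwards with t using norm_deriv_le_lip hL t
  have hg_int : IntervalIntegrable
      (fun t => (2*Complex.I/((4*k+1:ℕ):ℂ)) * (((a t : ℝ):ℂ) + (t:ℂ)*Complex.I)^(4*k+1))
      volume (-r) r :=
    (Continuous.intervalIntegrable (by fun_prop) _ _)
  rw [intervalIntegral.integral_add hder_int hg_int, lip_ftc hPhiLip,
    intervalIntegral.integral_const_mul]
  -- step 3: symmetry of the remaining integral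
  set Q : ℂ := ∫ t in (0:ℝ)..r, (((a t : ℝ):ℂ) + (t:ℂ)*Complex.I)^(4*k+1) with hQdef
  have hsymint : (∫ t in (-r)..r, (((a t : ℝ):ℂ) + (t:ℂ)*Complex.I)^(4*k+1))
      = 2*((Q.re : ℝ):ℂ) := by
    have hsplit : (∫ t in (-r)..r, (((a t : ℝ):ℂ) + (t:ℂ)*Complex.I)^(4*k+1))
        = (∫ t in (-r)..(0:ℝ), (((a t : ℝ):ℂ) + (t:ℂ)*Complex.I)^(4*k+1)) + Q :=
      (intervalIntegral.integral_add_adjacent_intervals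
        (hpowcont.intervalIntegrable _ _) (hpowcont.intervalIntegrable _ _)).symm
    have hneg : (∫ t in (0:ℝ)..r, (((a (-t) : ℝ):ℂ) + ((-t : ℝ):ℂ)*Complex.I)^(4*k+1))
        = ∫ t in (-r)..(-(0:ℝ)), (((a t : ℝ):ℂ) + (t:ℂ)*Complex.I)^(4*k+1) :=
      intervalIntegral.integral_comp_neg (fun t => (((a t : ℝ):ℂ) + (t:ℂ)*Complex.I)^(4*k+1))
    rw [neg_zero] at hneg
    have hconjint : (∫ t in (0:ℝ)..r, (((a (-t) : ℝ):ℂ) + ((-t : ℝ):ℂ)*Complex.I)^(4*k+1))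
        = (starRingEnd ℂ) Q := by
      rw [hQdef, ← intervalIntegral_conj]
      apply intervalIntegral.integral_congr
      intro t _
      simp only [hsym, map_pow, map_add, map_mul, Complex.conj_ofReal, Complex.conj_I]
      push_cast
      ring_nf
    rw [hsplit, ← hneg, hconjint, add_comm ((starRingEnd ℂ) Q) Q, Complex.add_conj]
    push_cast
    ring
  rw [hsymint]
  -- step 4: endpoint values of PhiF
  have hcr : clampF r r = r := clampF_eq ⟨by linarith, le_rfl⟩
  have hcnr : clampF r (-r) = -r := clampF_eq ⟨le_rfl, by linarith⟩
  have hanr : a (-r) = r := by rw [hsym r]; exact hend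
  have hzr : zC a r r = (r:ℂ) + (r:ℂ)*Complex.I := by
    simp only [zC, hcr, hend]
  have hznr : zC a r (-r) = (r:ℂ) - (r:ℂ)*Complex.I := by
    simp only [zC, hcnr, hanr]
    push_cast
    ring
  have hrc2 : ((r:ℂ))^2 = 1/2 := by
    rw [← Complex.ofReal_pow, hr2]
    norm_num
  have hzr2 : ((r:ℂ) + (r:ℂ)*Complex.I)^2 = Complex.I := by
    linear_combination (2*Complex.I)*hrc2 + ((r:ℂ)^2)*Complex.I_sq
  have hznr2 : ((r:ℂ) - (r:ℂ)*Complex.I)^2 = -Complex.I := by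
    linear_combination (-2*Complex.I)*hrc2 + ((r:ℂ)^2)*Complex.I_sq
  have hw4 : ∀ w : ℂ, (w^2 = Complex.I ∨ w^2 = -Complex.I) → w^(4*k) = (-1:ℂ)^k := by
    rintro w h
    have h4 : w^4 = -1 := by
      have hw : w^4 = (w^2)^2 := by ring
      rcases h with h | h
      · rw [hw, h, Complex.I_sq]
      · rw [hw, h, neg_pow, Complex.I_sq]; norm_num
    rw [pow_mul, h4]
  have hPdiff : PhiF a r k r - PhiF a r k (-r)
      = (-1:ℂ)^k * Complex.I * (2/((4*k+2:ℕ):ℂ)) - (-1:ℂ)^k * Complex.I * (2/((4*k+1:ℕ):ℂ)) := by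
    have e1 : zC a r r ^ (4*k+2) = (-1:ℂ)^k * Complex.I := by
      rw [hzr, pow_add, hw4 _ (Or.inl hzr2), hzr2]
    have e2 : zC a r (-r) ^ (4*k+2) = -((-1:ℂ)^k * Complex.I) := by
      rw [hznr, pow_add, hw4 _ (Or.inr hznr2), hznr2]; ring
    have e3 : zC a r r ^ (4*k+1) = (-1:ℂ)^k * ((r:ℂ) + (r:ℂ)*Complex.I) := by
      rw [hzr, pow_add, pow_one, hw4 _ (Or.inl hzr2)]
    have e4 : zC a r (-r) ^ (4*k+1) = (-1:ℂ)^k * ((r:ℂ) - (r:ℂ)*Complex.I) := by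
      rw [hznr, pow_add, pow_one, hw4 _ (Or.inr hznr2)]
    simp only [PhiF]
    rw [e1, e2, e3, e4, hcr, hcnr]
    push_cast
    linear_combination (-(4*Complex.I*(-1:ℂ)^k/(4*(k:ℂ)+1)))*hrc2
  rw [hPdiff]
  -- step 5: final algebraic equivalence
  have hmain : (-1:ℂ)^k * Complex.I * (2/((4*k+2:ℕ):ℂ)) - (-1:ℂ)^k * Complex.I * (2/((4*k+1:ℕ):ℂ))
      + 2*Complex.I/((4*k+1:ℕ):ℂ)
          * (2*((((-1:ℝ)^k * (ω+1) / (4*((2*k+1:ℕ):ℝ)) : ℝ)):ℂ))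
      = (-1:ℂ)^k * Complex.I * (ω:ℂ) / (((4*k+1 : ℕ) : ℂ) * ((2*k+1 : ℕ) : ℂ)) := by
    have hn1' : (4*(k:ℂ)+2) ≠ 0 := by exact_mod_cast hn1
    have hn2' : (4*(k:ℂ)+1) ≠ 0 := by exact_mod_cast hn2
    have hn3' : (2*(k:ℂ)+1) ≠ 0 := by exact_mod_cast hn3
    push_cast
    field_simp
    ring
  constructor
  · intro h
    have h2 : (4*Complex.I/((4*k+1:ℕ):ℂ))
        * (((Q.re : ℝ):ℂ) - ((((-1:ℝ)^k * (ω+1) / (4*((2*k+1:ℕ):ℝ)) : ℝ)):ℂ)) = 0 := by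
      linear_combination h - hmain
    have h3 : (4*Complex.I/(((4*k+1:ℕ):ℂ))) ≠ 0 := by
      apply div_ne_zero _ hn2
      simp [Complex.I_ne_zero]
    have h4 := (mul_eq_zero.mp h2).resolve_left h3
    have h5 : ((Q.re : ℝ):ℂ) = ((((-1:ℝ)^k * (ω+1) / (4*((2*k+1:ℕ):ℝ)) : ℝ)):ℂ) :=
      sub_eq_zero.mp h4
    exact_mod_cast h5
  · intro h
    rw [h]
    exact hmain

end
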